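/- Let A > 0 and B > 0 be real numbers with A + B > 1. Then there exists a constant C = C(A, B) > 0 such that for every σ₀ ∈ ℝ, ∑_{k₁ ∈ ℤ∖{0}} ∑_{k₂ ∈ ℤ∖{0}} ⟨k₁⟩^{−A} ⟨k₂⟩^{−A} ⟨σ₀ − 2 k₁ k₂⟩^{−B} ≤ C; in particular the supremum over σ₀ ∈ ℝ of this double sum is finite. -/

import Mathlib

open Real

/-- The Japanese bracket `⟨x⟩ = (1 + x²)^{1/2}`. -/
noncomputable def jpn (x : ℝ) : ℝ := Real.sqrt (1 + x ^ 2)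

lemma one_le_jpn (x : ℝ) : 1 ≤ jpn x := by
  have h := Real.sqrt_le_sqrt (show (1:ℝ) ≤ 1 + x ^ 2 by nlinarith [sq_nonneg x])
  simpa [jpn] using h

lemma jpn_pos (x : ℝ) : 0 < jpn x := lt_of_lt_of_le one_pos (one_le_jpn x)

lemma abs_le_jpn (x : ℝ) : |x| ≤ jpn x := by
  rw [jpn, ← Real.sqrt_sq_eq_abs]
  exact Real.sqrt_le_sqrt (by nlinarith)

lemma jpn_le_jpn {x y : ℝ} (h : x ^ 2 ≤ y ^ 2) : jpn x ≤ jpn y :=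
  Real.sqrt_le_sqrt (by linarith)

lemma jpn_mul_le (a b : ℝ) : jpn (a * b) ≤ jpn a * jpn b := by
  rw [jpn, jpn, jpn, ← Real.sqrt_mul (by positivity)]
  exact Real.sqrt_le_sqrt (by nlinarith [sq_nonneg a, sq_nonneg b, sq_nonneg (a*b)])

lemma jpn_rpow_neg_le {x y : ℝ} {s : ℝ} (hs : 0 ≤ s) (h : jpn y ≤ jpn x) :
    jpn x ^ (-s) ≤ jpn y ^ (-s) :=
  Real.rpow_le_rpow_of_nonpos (jpn_pos y) h (neg_nonpos.2 hs)

lemma jpn_rpow_pos (x s : ℝ) : 0 < jpn x ^ s := Real.rpow_pos_of_pos (jpn_pos x) s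

lemma jpn_rpow_le_one {x s : ℝ} (hs : 0 ≤ s) : jpn x ^ (-s) ≤ 1 := by
  rw [← Real.rpow_zero (jpn x)]
  exact Real.rpow_le_rpow_of_exponent_le (one_le_jpn x) (by linarith)

lemma summable_jpn_int {s : ℝ} (hs : 1 < s) :
    Summable (fun m : ℤ => jpn (m : ℝ) ^ (-s)) := by
  have key : ∀ f : ℕ → ℝ, (∀ n : ℕ, f n = jpn ((n : ℝ)) ^ (-s)) → Summable f := by
    intro f hf
    have h2 : Summable (fun n : ℕ => (2:ℝ)^s * ((n:ℝ) + 1) ^ (-s)) := by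
      have h1 := (Real.summable_one_div_nat_rpow (p := s)).2 hs
      have h3 : Summable (fun n : ℕ => 1 / ((n + 1 : ℕ) : ℝ) ^ s) :=
        (summable_nat_add_iff 1).2 h1
      apply Summable.mul_left
      refine h3.congr fun n => ?_
      rw [Real.rpow_neg (by positivity), one_div]
      push_cast
      ring_nf
    apply h2.of_nonneg_of_le (fun n => by rw [hf]; exact (jpn_rpow_pos _ _).le)
    intro n
    rw [hf]
    have h1 : (n : ℝ) + 1 ≤ 2 * jpn n := by
      have := abs_le_jpn (n : ℝ)
      have h0 := one_le_jpn (n : ℝ)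
      rw [abs_of_nonneg (by positivity)] at this
      linarith
    calc jpn (n:ℝ) ^ (-s) = (2:ℝ) ^ s * (2 * jpn n) ^ (-s) := by
          rw [Real.mul_rpow (by norm_num) (jpn_pos _).le, ← mul_assoc,
            ← Real.rpow_add (by norm_num), add_neg_cancel, Real.rpow_zero, one_mul]
      _ ≤ (2:ℝ) ^ s * ((n:ℝ)+1) ^ (-s) := by
          apply mul_le_mul_of_nonneg_left _ (by positivity)
          exact Real.rpow_le_rpow_of_nonpos (by positivity) h1 (by linarith)
  apply Summable.of_nat_of_neg
  · exact key _ fun n => rfl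
  · refine (key (fun n => jpn ((n:ℝ)) ^ (-s)) fun n => rfl).congr fun n => ?_
    simp only [Int.cast_neg, Int.cast_natCast]
    congr 1
    exact (jpn_le_jpn (le_of_eq (by ring))).antisymm (jpn_le_jpn (le_of_eq (by ring)))

lemma jpn_le_three_mul {x y : ℝ} (h : 1 + y^2 ≤ 9*(1+x^2)) : jpn y ≤ 3 * jpn x := by
  rw [jpn, jpn, show (3:ℝ) = Real.sqrt 9 by
    rw [show (9:ℝ) = 3^2 by norm_num, Real.sqrt_sq (by norm_num)],
    ← Real.sqrt_mul (by norm_num)]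
  exact Real.sqrt_le_sqrt h

lemma jpn_sub_floor (τ : ℝ) (m : ℤ) : jpn ((m : ℝ) - ⌊τ⌋) ≤ 3 * jpn (τ - m) := by
  apply jpn_le_three_mul
  have h1 : (⌊τ⌋ : ℝ) ≤ τ := Int.floor_le τ
  have h2 : τ < ⌊τ⌋ + 1 := Int.lt_floor_add_one τ
  rcases le_or_gt m ⌊τ⌋ with h | h
  · have : (m:ℝ) ≤ ⌊τ⌋ := by exact_mod_cast h
    nlinarith [sq_nonneg (τ - m), sq_nonneg ((m:ℝ) - ⌊τ⌋)]
  · have : (⌊τ⌋:ℝ) + 1 ≤ m := by exact_mod_cast h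
    nlinarith [sq_nonneg (8*((m:ℝ) - ⌊τ⌋) - 9*(τ - ⌊τ⌋)), sq_nonneg (τ - ⌊τ⌋)]

lemma conv_bound (α B : ℝ) (hα : 0 < α) (hB : 0 < B) (hs : 1 < α + B) :
    ∃ C : ℝ, 0 < C ∧ ∀ τ : ℝ,
      Summable (fun m : ℤ => jpn (m : ℝ) ^ (-α) * jpn (τ - m) ^ (-B)) ∧
      ∑' m : ℤ, jpn (m : ℝ) ^ (-α) * jpn (τ - m) ^ (-B) ≤ C := by
  set s := α + B with hsdef
  have hZs : Summable (fun m : ℤ => jpn (m : ℝ) ^ (-s)) := summable_jpn_int hs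
  set Z := ∑' m : ℤ, jpn (m : ℝ) ^ (-s) with hZ
  have hZpos : 0 < Z := by
    exact Summable.tsum_pos hZs (fun m => (jpn_rpow_pos _ _).le) 0 (jpn_rpow_pos _ _)
  refine ⟨Z + 3^s * Z, by positivity, fun τ => ?_⟩
  set a := ⌊τ⌋ with ha
  have hshift : Summable (fun m : ℤ => jpn ((m:ℝ) - a) ^ (-s)) := by
    have : Summable (fun m : ℤ => jpn (((m - a : ℤ)):ℝ) ^ (-s)) :=
      ((Equiv.subRight a).summable_iff (f := fun m : ℤ => jpn (m:ℝ) ^ (-s))).2 hZs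
    refine this.congr fun m => ?_
    push_cast
    ring_nf
  have hshift_sum : ∑' m : ℤ, jpn ((m:ℝ) - a) ^ (-s) = Z := by
    rw [hZ, ← (Equiv.subRight a).tsum_eq (fun m : ℤ => jpn (m:ℝ) ^ (-s))]
    apply tsum_congr
    intro m
    simp only [Equiv.subRight_apply]
    push_cast
    ring_nf
  set g : ℤ → ℝ := fun m => jpn (m:ℝ) ^ (-s) + 3^s * jpn ((m:ℝ) - a) ^ (-s) with hg
  have hgsummable : Summable g := hZs.add (hshift.mul_left _)
  have hgsum : ∑' m, g m = Z + 3^s * Z := by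
    rw [hg, Summable.tsum_add hZs (hshift.mul_left _), tsum_mul_left, hshift_sum]
  have hpt : ∀ m : ℤ, jpn (m : ℝ) ^ (-α) * jpn (τ - m) ^ (-B) ≤ g m := by
    intro m
    have case2 : jpn (τ - m) ^ (-s) ≤ 3^s * jpn ((m:ℝ) - a) ^ (-s) := by
      have hb3 : jpn ((m:ℝ) - a) / 3 ≤ jpn (τ - m) := by
        have := jpn_sub_floor τ m
        linarith
      have h0 : (0:ℝ) < jpn ((m:ℝ) - a) / 3 := by
        have := jpn_pos ((m:ℝ) - a); linarith
      have := Real.rpow_le_rpow_of_nonpos h0 hb3 (neg_nonpos.2 (by linarith : (0:ℝ) ≤ s))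
      calc jpn (τ - m) ^ (-s) ≤ (jpn ((m:ℝ) - a) / 3) ^ (-s) := this
        _ = 3^s * jpn ((m:ℝ) - a) ^ (-s) := by
            rw [div_eq_mul_inv, Real.mul_rpow (jpn_pos _).le (by norm_num),
              Real.inv_rpow (by norm_num), ← Real.rpow_neg (by norm_num), neg_neg]
            ring
    rcases le_total (jpn (τ - m)) (jpn (m:ℝ)) with h | h
    · calc jpn (m : ℝ) ^ (-α) * jpn (τ - m) ^ (-B)
          ≤ jpn (τ - m) ^ (-α) * jpn (τ - m) ^ (-B) :=
            mul_le_mul_of_nonneg_right (jpn_rpow_neg_le hα.le h) (jpn_rpow_pos _ _).le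
        _ = jpn (τ - m) ^ (-s) := by
            rw [← Real.rpow_add (jpn_pos _), hsdef]; ring_nf
        _ ≤ 3^s * jpn ((m:ℝ) - a) ^ (-s) := case2
        _ ≤ g m := le_add_of_nonneg_left (jpn_rpow_pos _ _).le
    · calc jpn (m : ℝ) ^ (-α) * jpn (τ - m) ^ (-B)
          ≤ jpn (m:ℝ) ^ (-α) * jpn (m:ℝ) ^ (-B) :=
            mul_le_mul_of_nonneg_left (jpn_rpow_neg_le hB.le h) (jpn_rpow_pos _ _).le
        _ = jpn (m:ℝ) ^ (-s) := by
            rw [← Real.rpow_add (jpn_pos _), hsdef]; ring_nf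
        _ ≤ g m := le_add_of_nonneg_right (mul_nonneg (by positivity) (jpn_rpow_pos _ _).le)
  have hsummable : Summable (fun m : ℤ => jpn (m : ℝ) ^ (-α) * jpn (τ - m) ^ (-B)) :=
    hgsummable.of_nonneg_of_le (fun m => mul_nonneg (jpn_rpow_pos _ _).le (jpn_rpow_pos _ _).le) hpt
  exact ⟨hsummable, le_trans (Summable.tsum_le_tsum hpt hsummable hgsummable) (le_of_eq hgsum)⟩

lemma divisor_bound (δ : ℝ) (hδ : 0 < δ) :
    ∃ C : ℝ, 1 ≤ C ∧ ∀ n : ℕ, n ≠ 0 → ((n.divisors.card : ℝ)) ≤ C * (n : ℝ) ^ δ := by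
  have hL : 0 < Real.log 2 := Real.log_pos (by norm_num)
  set M : ℝ := 1 + 1/(δ * Real.log 2) with hM
  have hM1 : 1 ≤ M := by
    rw [hM]; nlinarith [one_div_pos.2 (mul_pos hδ hL)]
  set N : ℕ := ⌈(2:ℝ)^(1/δ)⌉₊ with hN
  refine ⟨M ^ N, one_le_pow₀ hM1, fun n hn => ?_⟩
  -- pointwise bound on each prime factor
  have key : ∀ p ∈ n.primeFactors,
      ((n.factorization p : ℝ) + 1) ≤
        (if p < N then M else 1) * ((p:ℝ) ^ (n.factorization p)) ^ δ := by
    intro p hp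
    have hprime := Nat.prime_of_mem_primeFactors hp
    have hp2 : (2:ℝ) ≤ (p:ℝ) := by exact_mod_cast hprime.two_le
    set a := n.factorization p with hadef
    have hxa : ((p:ℝ) ^ a) ^ δ = (p:ℝ) ^ ((a:ℝ) * δ) := by
      rw [← Real.rpow_natCast (p:ℝ) a, ← Real.rpow_mul (by positivity)]
    rw [hxa]
    have ha0 : (0:ℝ) ≤ (a:ℝ) := Nat.cast_nonneg a
    by_cases hpN : p < N
    · rw [if_pos hpN]
      have e1 : 1 + Real.log 2 * ((a:ℝ)*δ) ≤ (2:ℝ) ^ ((a:ℝ)*δ) := by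
        rw [Real.rpow_def_of_pos (by norm_num)]
        linarith [Real.add_one_le_exp (Real.log 2 * ((a:ℝ)*δ))]
      have e2 : (2:ℝ) ^ ((a:ℝ)*δ) ≤ (p:ℝ) ^ ((a:ℝ)*δ) :=
        Real.rpow_le_rpow (by norm_num) hp2 (by positivity)
      have hM0 : (0:ℝ) < M := lt_of_lt_of_le one_pos hM1
      have e3 : M * (1 + Real.log 2 * ((a:ℝ)*δ)) ≤ M * (p:ℝ) ^ ((a:ℝ)*δ) := by
        apply mul_le_mul_of_nonneg_left (le_trans e1 e2) hM0.le
      have e4 : (a:ℝ) + 1 ≤ M * (1 + Real.log 2 * ((a:ℝ)*δ)) := by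
        rw [hM]
        have h6 : (1/(δ * Real.log 2)) * (Real.log 2 * ((a:ℝ)*δ)) = (a:ℝ) := by
          field_simp
        nlinarith [h6, le_of_lt (one_div_pos.2 (mul_pos hδ hL)),
          mul_nonneg hL.le (mul_nonneg ha0 hδ.le)]
      linarith
    · rw [if_neg hpN, one_mul]
      push_neg at hpN
      have hNp : ((2:ℝ)^(1/δ)) ≤ (p:ℝ) := by
        calc ((2:ℝ)^(1/δ)) ≤ (N:ℝ) := Nat.le_ceil _
          _ ≤ (p:ℝ) := by exact_mod_cast hpN
      have e1 : ((2:ℝ)^(1/δ)) ^ ((a:ℝ)*δ) ≤ (p:ℝ) ^ ((a:ℝ)*δ) :=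
        Real.rpow_le_rpow (by positivity) hNp (by positivity)
      have e2 : ((2:ℝ)^(1/δ)) ^ ((a:ℝ)*δ) = (2:ℝ)^(a:ℝ) := by
        rw [← Real.rpow_mul (by norm_num)]
        congr 1
        field_simp
      have e3 : (a:ℝ) + 1 ≤ (2:ℝ)^(a:ℝ) := by
        rw [Real.rpow_natCast]
        exact_mod_cast Nat.succ_le_of_lt (Nat.lt_two_pow_self (n := a))
      linarith [e2 ▸ e1]
  -- assemble
  have hd : ((n.divisors.card : ℝ)) = ∏ p ∈ n.primeFactors, ((n.factorization p : ℝ) + 1) := by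
    rw [Nat.card_divisors hn]
    push_cast
    rfl
  have hprod_le : ∏ p ∈ n.primeFactors, ((n.factorization p : ℝ) + 1) ≤
      ∏ p ∈ n.primeFactors,
        ((if p < N then M else 1) * ((p:ℝ) ^ (n.factorization p)) ^ δ) :=
    Finset.prod_le_prod (fun p _ => by positivity) key
  have hsplit : ∏ p ∈ n.primeFactors,
        ((if p < N then M else 1) * ((p:ℝ) ^ (n.factorization p)) ^ δ)
      = (∏ p ∈ n.primeFactors, (if p < N then M else 1)) *
        ∏ p ∈ n.primeFactors, ((p:ℝ) ^ (n.factorization p)) ^ δ :=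
    Finset.prod_mul_distrib
  have hnprod : ∏ p ∈ n.primeFactors, ((p:ℝ) ^ (n.factorization p)) = (n:ℝ) := by
    have h := Nat.factorization_prod_pow_eq_self hn
    rw [Finsupp.prod, Nat.support_factorization] at h
    exact_mod_cast congrArg (Nat.cast : ℕ → ℝ) h
  have hrpow : ∏ p ∈ n.primeFactors, ((p:ℝ) ^ (n.factorization p)) ^ δ = (n:ℝ) ^ δ := by
    rw [Real.finset_prod_rpow _ _ (fun p _ => by positivity), hnprod]
  have hc : (∏ p ∈ n.primeFactors, (if p < N then M else 1)) ≤ M ^ N := by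
    classical
    rw [← Finset.prod_filter_mul_prod_filter_not n.primeFactors (fun p => p < N)]
    have h1 : ∏ p ∈ n.primeFactors.filter (fun p => p < N), (if p < N then M else 1)
        = M ^ (n.primeFactors.filter (fun p => p < N)).card := by
      rw [Finset.prod_congr rfl (fun p hp => if_pos (Finset.mem_filter.1 hp).2),
        Finset.prod_const]
    have h2 : ∏ p ∈ n.primeFactors.filter (fun p => ¬ p < N), (if p < N then M else 1) = 1 :=
      Finset.prod_eq_one (fun p hp => if_neg (Finset.mem_filter.1 hp).2)
    rw [h1, h2, mul_one]
    apply pow_le_pow_right₀ hM1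
    calc (n.primeFactors.filter (fun p => p < N)).card
        ≤ (Finset.range N).card := Finset.card_le_card (fun p hp => by
          rw [Finset.mem_range]; exact (Finset.mem_filter.1 hp).2)
      _ = N := Finset.card_range N
  calc ((n.divisors.card : ℝ)) ≤ (∏ p ∈ n.primeFactors, (if p < N then M else 1)) * (n:ℝ)^δ := by
        rw [hd]; rw [hsplit, hrpow] at hprod_le; exact hprod_le
    _ ≤ M ^ N * (n:ℝ)^δ := by
        apply mul_le_mul_of_nonneg_right hc (by positivity)

/-- Divisor-counting sum bound: for `A, B > 0` with `A + B > 1`, the double sum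
`∑_{k₁ ≠ 0} ∑_{k₂ ≠ 0} ⟨k₁⟩^{-A} ⟨k₂⟩^{-A} ⟨σ₀ - 2k₁k₂⟩^{-B}` is bounded uniformly
in `σ₀ ∈ ℝ`. -/
theorem divisor_sum_bound (A B : ℝ) (hA : 0 < A) (hB : 0 < B) (hAB : 1 < A + B) :
    ∃ C : ℝ, 0 < C ∧ ∀ σ₀ : ℝ,
      (∑' k₁ : {k : ℤ // k ≠ 0}, ∑' k₂ : {k : ℤ // k ≠ 0},
          jpn ((k₁ : ℤ) : ℝ) ^ (-A) * jpn ((k₂ : ℤ) : ℝ) ^ (-A)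
            * jpn (σ₀ - 2 * ((k₁ : ℤ) : ℝ) * ((k₂ : ℤ) : ℝ)) ^ (-B))
        ≤ C := by
  classical
  set δ : ℝ := min A (A + B - 1) / 2 with hδdef
  have hδ : 0 < δ := by
    rw [hδdef]
    have : 0 < min A (A + B - 1) := lt_min hA (by linarith)
    linarith
  set α : ℝ := A - δ with hαdef
  have hα : 0 < α := by
    have : δ < A := by
      rw [hδdef]
      have h1 : min A (A + B - 1) ≤ A := min_le_left _ _
      linarith
    rw [hαdef]; linarith
  have hαB : 1 < α + B := by
    have h1 : min A (A + B - 1) ≤ A + B - 1 := min_le_right _ _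
    rw [hαdef, hδdef]
    linarith
  obtain ⟨Cd, hCd1, hCd⟩ := divisor_bound δ hδ
  obtain ⟨Cc, hCc0, hCc⟩ := conv_bound α B hα hB hαB
  refine ⟨2 * Cd * Cc, by positivity, fun σ₀ => ?_⟩
  set S := {k : ℤ // k ≠ 0}
  set F : S × S → ℝ := fun p =>
    jpn ((p.1 : ℤ) : ℝ) ^ (-A) * jpn ((p.2 : ℤ) : ℝ) ^ (-A)
      * jpn (σ₀ - 2 * ((p.1 : ℤ) : ℝ) * ((p.2 : ℤ) : ℝ)) ^ (-B) with hF
  have hFnonneg : ∀ p, 0 ≤ F p := fun p =>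
    mul_nonneg (mul_nonneg (jpn_rpow_pos _ _).le (jpn_rpow_pos _ _).le) (jpn_rpow_pos _ _).le
  set G : ℤ → ℝ := fun m => jpn (m : ℝ) ^ (-α) * jpn (σ₀/2 - m) ^ (-B) with hG
  obtain ⟨hGsummable, hGsum⟩ := hCc (σ₀/2)
  have hGnonneg : ∀ m, 0 ≤ G m := fun m =>
    mul_nonneg (jpn_rpow_pos _ _).le (jpn_rpow_pos _ _).le
  -- the key finite-sum bound
  have key : ∀ u : Finset (S × S), ∑ p ∈ u, F p ≤ 2 * Cd * Cc := by
    intro u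
    set pr : S × S → ℤ := fun p => (p.1 : ℤ) * (p.2 : ℤ) with hpr
    set t : Finset ℤ := u.image pr with ht
    rw [← Finset.sum_fiberwise_of_maps_to (fun p hp => Finset.mem_image_of_mem pr hp) F]
    have inner : ∀ n ∈ t, ∑ p ∈ u.filter (fun p => pr p = n), F p ≤ 2 * Cd * G n := by
      intro n hn
      obtain ⟨q, hq, hqn⟩ := Finset.mem_image.1 hn
      have hn0 : n ≠ 0 := hqn ▸ mul_ne_zero q.1.2 q.2.2
      -- each term in the fiber is at most h n
      have hterm : ∀ p ∈ u.filter (fun p => pr p = n), F p ≤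
          jpn ((n : ℤ) : ℝ) ^ (-A) * jpn (σ₀ - 2 * (n:ℝ)) ^ (-B) := by
        intro p hp
        have hpn : ((p.1 : ℤ) : ℝ) * ((p.2 : ℤ) : ℝ) = (n : ℝ) := by
          have := (Finset.mem_filter.1 hp).2
          rw [hpr] at this
          exact_mod_cast congrArg (Int.cast : ℤ → ℝ) this
        have h1 : jpn ((n : ℤ) : ℝ) ≤ jpn ((p.1 : ℤ) : ℝ) * jpn ((p.2 : ℤ) : ℝ) := by
          calc jpn ((n : ℤ) : ℝ) = jpn (((p.1 : ℤ) : ℝ) * ((p.2 : ℤ) : ℝ)) := by rw [hpn]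
            _ ≤ _ := jpn_mul_le _ _
        have h2 : jpn ((p.1 : ℤ) : ℝ) ^ (-A) * jpn ((p.2 : ℤ) : ℝ) ^ (-A)
            ≤ jpn ((n : ℤ) : ℝ) ^ (-A) := by
          rw [← Real.mul_rpow (jpn_pos _).le (jpn_pos _).le]
          exact Real.rpow_le_rpow_of_nonpos (jpn_pos _) h1 (neg_nonpos.2 hA.le)
        show jpn ((p.1 : ℤ) : ℝ) ^ (-A) * jpn ((p.2 : ℤ) : ℝ) ^ (-A)
          * jpn (σ₀ - 2 * ((p.1 : ℤ) : ℝ) * ((p.2 : ℤ) : ℝ)) ^ (-B) ≤ _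
        rw [show σ₀ - 2 * ((p.1 : ℤ) : ℝ) * ((p.2 : ℤ) : ℝ) = σ₀ - 2 * (n:ℝ) by
          rw [mul_assoc, hpn]]
        exact mul_le_mul_of_nonneg_right h2 (jpn_rpow_pos _ _).le
      -- cardinality of the fiber
      have hcard : ((u.filter (fun p => pr p = n)).card : ℝ) ≤ 2 * Cd * jpn ((n:ℤ):ℝ) ^ δ := by
        set fib := u.filter (fun p => pr p = n) with hfib
        set f : S × S → ℤ := fun p => (p.1 : ℤ) with hf
        have hinj : Set.InjOn f fib := by
          intro p hp q hq hpq
          have hp2 := (Finset.mem_filter.1 (Finset.mem_coe.1 hp)).2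
          have hq2 := (Finset.mem_filter.1 (Finset.mem_coe.1 hq)).2
          rw [hpr] at hp2 hq2
          have hp3 : (p.1 : ℤ) * (p.2 : ℤ) = n := hp2
          have hq3 : (q.1 : ℤ) * (q.2 : ℤ) = n := hq2
          have h1 : (p.1 : ℤ) = (q.1 : ℤ) := hpq
          have h2 : (p.2 : ℤ) = (q.2 : ℤ) := by
            apply mul_left_cancel₀ p.1.2
            rw [hp3, h1, hq3]
          ext
          · exact h1
          · exact h2
        have hc1 : fib.card = (fib.image f).card := (Finset.card_image_of_injOn hinj).symm
        set t' := fib.image f with ht'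
        have hdvd : ∀ d ∈ t', d ∣ n := by
          intro d hd
          obtain ⟨p, hp, hpd⟩ := Finset.mem_image.1 hd
          have := (Finset.mem_filter.1 hp).2
          rw [hpr] at this
          exact ⟨(p.2 : ℤ), by rw [← this, ← hpd]⟩
        have hc2 : t'.card ≤ 2 * (t'.image Int.natAbs).card := by
          apply Finset.card_le_mul_card_image
          intro b hb
          have hsub : t'.filter (fun x => x.natAbs = b) ⊆ {(b : ℤ), -(b : ℤ)} := by
            intro x hx
            have hxb := (Finset.mem_filter.1 hx).2
            rcases Int.natAbs_eq x with h | h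
            · exact Finset.mem_insert.2 (Or.inl (by rw [h, hxb]))
            · refine Finset.mem_insert.2 (Or.inr ?_)
              rw [Finset.mem_singleton, h, hxb]
          calc (t'.filter (fun x => x.natAbs = b)).card ≤ ({(b:ℤ), -(b:ℤ)} : Finset ℤ).card :=
                Finset.card_le_card hsub
            _ ≤ 2 := Finset.card_insert_le _ _ |>.trans (by simp)
        have hc3 : (t'.image Int.natAbs) ⊆ n.natAbs.divisors := by
          intro b hb
          obtain ⟨d, hd, hdb⟩ := Finset.mem_image.1 hb
          rw [Nat.mem_divisors]
          exact ⟨hdb ▸ Int.natAbs_dvd_natAbs.2 (hdvd d hd), Int.natAbs_ne_zero.2 hn0⟩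
        have hc4 : ((n.natAbs.divisors.card : ℝ)) ≤ Cd * ((n.natAbs : ℕ) : ℝ) ^ δ :=
          hCd n.natAbs (Int.natAbs_ne_zero.2 hn0)
        have hc5 : ((n.natAbs : ℕ) : ℝ) = |((n : ℤ) : ℝ)| := by
          rw [Nat.cast_natAbs]
          exact Int.cast_abs
        have hc6 : |((n : ℤ) : ℝ)| ^ δ ≤ jpn ((n:ℤ):ℝ) ^ δ :=
          Real.rpow_le_rpow (abs_nonneg _) (abs_le_jpn _) hδ.le
        calc ((fib.card : ℝ)) = (t'.card : ℝ) := by rw [hc1, ht']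
          _ ≤ 2 * ((t'.image Int.natAbs).card : ℝ) := by exact_mod_cast hc2
          _ ≤ 2 * ((n.natAbs.divisors.card : ℝ)) := by
              have := Finset.card_le_card hc3
              have : ((t'.image Int.natAbs).card : ℝ) ≤ ((n.natAbs.divisors.card : ℝ)) := by
                exact_mod_cast this
              linarith
          _ ≤ 2 * (Cd * jpn ((n:ℤ):ℝ) ^ δ) := by
              apply mul_le_mul_of_nonneg_left _ (by norm_num)
              calc ((n.natAbs.divisors.card : ℝ)) ≤ Cd * ((n.natAbs : ℕ) : ℝ) ^ δ := hc4
                _ = Cd * |((n : ℤ) : ℝ)| ^ δ := by rw [hc5]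
                _ ≤ Cd * jpn ((n:ℤ):ℝ) ^ δ :=
                    mul_le_mul_of_nonneg_left hc6 (by linarith)
          _ = 2 * Cd * jpn ((n:ℤ):ℝ) ^ δ := by ring
      -- combine
      have hδA : jpn ((n:ℤ):ℝ) ^ δ * jpn ((n:ℤ):ℝ) ^ (-A) = jpn ((n:ℤ):ℝ) ^ (-α) := by
        rw [← Real.rpow_add (jpn_pos _), hαdef]
        ring_nf
      have hBB : jpn (σ₀ - 2 * (n:ℝ)) ^ (-B) ≤ jpn (σ₀/2 - (n:ℝ)) ^ (-B) := by
        apply jpn_rpow_neg_le hB.le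
        apply jpn_le_jpn
        nlinarith [sq_nonneg (σ₀/2 - (n:ℝ))]
      calc ∑ p ∈ u.filter (fun p => pr p = n), F p
          ≤ (u.filter (fun p => pr p = n)).card •
            (jpn ((n : ℤ) : ℝ) ^ (-A) * jpn (σ₀ - 2 * (n:ℝ)) ^ (-B)) :=
            Finset.sum_le_card_nsmul _ _ _ hterm
        _ = ((u.filter (fun p => pr p = n)).card : ℝ) *
            (jpn ((n : ℤ) : ℝ) ^ (-A) * jpn (σ₀ - 2 * (n:ℝ)) ^ (-B)) := by
            rw [nsmul_eq_mul]
        _ ≤ (2 * Cd * jpn ((n:ℤ):ℝ) ^ δ) *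
            (jpn ((n : ℤ) : ℝ) ^ (-A) * jpn (σ₀ - 2 * (n:ℝ)) ^ (-B)) := by
            apply mul_le_mul_of_nonneg_right hcard
            exact mul_nonneg (jpn_rpow_pos _ _).le (jpn_rpow_pos _ _).le
        _ = 2 * Cd * ((jpn ((n:ℤ):ℝ) ^ δ * jpn ((n:ℤ):ℝ) ^ (-A)) *
            jpn (σ₀ - 2 * (n:ℝ)) ^ (-B)) := by ring
        _ ≤ 2 * Cd * G n := by
            apply mul_le_mul_of_nonneg_left _ (by positivity)
            rw [hδA, hG]
            exact mul_le_mul_of_nonneg_left hBB (jpn_rpow_pos _ _).le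
    calc ∑ n ∈ t, ∑ p ∈ u.filter (fun p => pr p = n), F p
        ≤ ∑ n ∈ t, 2 * Cd * G n := Finset.sum_le_sum inner
      _ = 2 * Cd * ∑ n ∈ t, G n := by rw [Finset.mul_sum]
      _ ≤ 2 * Cd * ∑' m : ℤ, G m := by
          apply mul_le_mul_of_nonneg_left _ (by positivity)
          exact Summable.sum_le_tsum t (fun m _ => hGnonneg m) hGsummable
      _ ≤ 2 * Cd * Cc := by
          apply mul_le_mul_of_nonneg_left hGsum (by positivity)
  have hFsummable : Summable F := summable_of_sum_le hFnonneg key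
  have heq : (∑' k₁ : S, ∑' k₂ : S,
      jpn ((k₁ : ℤ) : ℝ) ^ (-A) * jpn ((k₂ : ℤ) : ℝ) ^ (-A)
        * jpn (σ₀ - 2 * ((k₁ : ℤ) : ℝ) * ((k₂ : ℤ) : ℝ)) ^ (-B)) = ∑' p : S × S, F p :=
    (Summable.tsum_prod' hFsummable (fun b => hFsummable.prod_factor b)).symm
  rw [heq]
  exact Summable.tsum_le_of_sum_le hFsummable key
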